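/- For every x ∈ ℝⁿ and z ∈ ℂˡ not both zero, the vector (x; -S⁻¹Bx; z) is an eigenvector of 𝒫⁻¹ℬ corresponding to eigenvalue 1; in particular, 1 is an eigenvalue of 𝒫⁻¹ℬ of algebraic multiplicity at least n + l. -/

import Mathlib

open Matrix

noncomputable section

/-- 3×3 block matrix with blocks of sizes n, m, l. -/
def blk3 {n m l : ℕ} (M11 : Matrix (Fin n) (Fin n) ℝ) (M12 : Matrix (Fin n) (Fin m) ℝ)
    (M13 : Matrix (Fin n) (Fin l) ℝ) (M21 : Matrix (Fin m) (Fin n) ℝ)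
    (M22 : Matrix (Fin m) (Fin m) ℝ) (M23 : Matrix (Fin m) (Fin l) ℝ)
    (M31 : Matrix (Fin l) (Fin n) ℝ) (M32 : Matrix (Fin l) (Fin m) ℝ)
    (M33 : Matrix (Fin l) (Fin l) ℝ) :
    Matrix (Fin n ⊕ (Fin m ⊕ Fin l)) (Fin n ⊕ (Fin m ⊕ Fin l)) ℝ :=
  fromBlocks M11 (fromCols M12 M13) (fromRows M21 M31) (fromBlocks M22 M23 M32 M33)

/-- μ ∈ ℂ is an eigenvalue of the real matrix M (viewed over ℂ). -/
def IsEig {k : Type*} [Fintype k] (M : Matrix k k ℝ) (μ : ℂ) : Prop :=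
  ∃ v : k → ℂ, v ≠ 0 ∧ (M.map (fun x : ℝ => (x : ℂ))) *ᵥ v = μ • v

open Polynomial

/-- Characteristic polynomial is invariant under conjugation. -/
lemma aux_charpoly_conj {κ : Type*} [Fintype κ] [DecidableEq κ] (K Q Q' : Matrix κ κ ℝ)
    (h2 : Q' * Q = 1) : (Q' * K * Q).charpoly = K.charpoly := by
  have h2c : (Q'.map (C : ℝ →+* ℝ[X])) * (Q.map (C : ℝ →+* ℝ[X])) = 1 := by
    rw [← Matrix.map_mul, h2, Matrix.map_one _ (map_zero _) (map_one _)]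
  have hcm : charmatrix (Q' * K * Q)
      = (Q'.map (C : ℝ →+* ℝ[X])) * charmatrix K * (Q.map (C : ℝ →+* ℝ[X])) := by
    rw [charmatrix, charmatrix, RingHom.mapMatrix_apply, RingHom.mapMatrix_apply,
      Matrix.mul_sub, Matrix.sub_mul]
    congr 1
    · rw [Matrix.mul_assoc, (Matrix.scalar_commute (X : ℝ[X]) (fun r => Commute.all _ r)
        (Q.map (C : ℝ →+* ℝ[X]))).eq, ← Matrix.mul_assoc, h2c, Matrix.one_mul]
    · rw [← Matrix.map_mul, ← Matrix.map_mul, Matrix.mul_assoc]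
  rw [Matrix.charpoly, Matrix.charpoly, hcm, Matrix.det_mul, Matrix.det_mul]
  have hdet : (Q'.map (C : ℝ →+* ℝ[X])).det * (Q.map (C : ℝ →+* ℝ[X])).det = 1 := by
    rw [← Matrix.det_mul, h2c, Matrix.det_one]
  calc (Q'.map (C : ℝ →+* ℝ[X])).det * (charmatrix K).det * (Q.map (C : ℝ →+* ℝ[X])).det
      = ((Q'.map (C : ℝ →+* ℝ[X])).det * (Q.map (C : ℝ →+* ℝ[X])).det) * (charmatrix K).det := by
        ring
    _ = (charmatrix K).det := by rw [hdet, one_mul]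

/-- If `s.card` many columns of `T` coincide with columns of the identity, then
`(X-1)^s.card` divides the characteristic polynomial. -/
lemma aux_pow_dvd_charpoly {κ : Type*} [Fintype κ] [DecidableEq κ] (T : Matrix κ κ ℝ)
    (s : Finset κ) (h : ∀ i ∈ s, ∀ j, T j i = if j = i then 1 else 0) :
    ((X : ℝ[X]) - 1) ^ s.card ∣ T.charpoly := by
  classical
  set d : κ → ℝ[X] := fun i => if i ∈ s then X - 1 else 1 with hd
  set T' : Matrix κ κ ℝ[X] :=
    Matrix.of (fun j i => if i ∈ s then (if j = i then (1:ℝ[X]) else 0) else charmatrix T j i)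
    with hT'
  have key : charmatrix T = T' * Matrix.diagonal d := by
    refine Matrix.ext fun j i => ?_
    rw [Matrix.mul_diagonal]
    by_cases hi : i ∈ s
    · by_cases hji : j = i
      · subst hji
        rw [charmatrix_apply_eq, h j hi j]
        simp [hT', hd, hi]
      · rw [charmatrix_apply_ne _ _ _ hji, h i hi j]
        simp only [hT', hd, Matrix.of_apply, if_pos hi, if_neg hji, map_zero, neg_zero, zero_mul]
    · simp only [hT', hd, Matrix.of_apply, if_neg hi, mul_one]
  have hcp : T.charpoly = T'.det * ((X : ℝ[X]) - 1) ^ s.card := by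
    rw [Matrix.charpoly, key, Matrix.det_mul, Matrix.det_diagonal]
    congr 1
    rw [hd]
    calc ∏ i, (if i ∈ s then (X : ℝ[X]) - 1 else 1)
        = ∏ i ∈ Finset.univ ∩ s, ((X : ℝ[X]) - 1) := Finset.prod_ite_mem _ _ _
      _ = ((X : ℝ[X]) - 1) ^ s.card := by rw [Finset.univ_inter, Finset.prod_const]
  exact ⟨T'.det, by rw [hcp, mul_comm]⟩

theorem stmt12 {n m l : ℕ} (A : Matrix (Fin n) (Fin n) ℝ) (B : Matrix (Fin m) (Fin n) ℝ)
    (S : Matrix (Fin m) (Fin m) ℝ) (C : Matrix (Fin l) (Fin m) ℝ)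
    (hA : A.PosDef) (hS : S.PosDef) (hB : B.rank = m) (hC : C.rank = l) :
    (∀ (x : Fin n → ℝ) (z : Fin l → ℂ), (x ≠ 0 ∨ z ≠ 0) →
      (Sum.elim (fun i => (x i : ℂ))
          (Sum.elim (fun j => (((-(S⁻¹ * B)) *ᵥ x) j : ℂ)) z) : Fin n ⊕ (Fin m ⊕ Fin l) → ℂ) ≠ 0 ∧
      (((blk3 A Bᵀ 0 0 S (-Cᵀ) 0 C 0)⁻¹ * blk3 A Bᵀ 0 (-B) 0 (-Cᵀ) 0 C 0).map
          (fun x : ℝ => (x : ℂ))) *ᵥ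
        (Sum.elim (fun i => (x i : ℂ)) (Sum.elim (fun j => (((-(S⁻¹ * B)) *ᵥ x) j : ℂ)) z)) =
      (1 : ℂ) • Sum.elim (fun i => (x i : ℂ)) (Sum.elim (fun j => (((-(S⁻¹ * B)) *ᵥ x) j : ℂ)) z)) ∧
    n + l ≤ (((blk3 A Bᵀ 0 0 S (-Cᵀ) 0 C 0)⁻¹ *
        blk3 A Bᵀ 0 (-B) 0 (-Cᵀ) 0 C 0).charpoly).rootMultiplicity 1 := by
  classical
  have hSdet : IsUnit S.det := isUnit_iff_ne_zero.mpr hS.det_pos.ne'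
  have hAdet : IsUnit A.det := isUnit_iff_ne_zero.mpr hA.det_pos.ne'
  -- C has full row rank: vecMul by C is injective
  have hCsurj : Function.Surjective C.mulVecLin := by
    rw [← LinearMap.range_eq_top]
    apply Submodule.eq_top_of_finrank_eq
    rw [show Module.finrank ℝ (Fin l → ℝ) = l by simp]
    exact hC
  have hCvec : ∀ u : Fin l → ℝ, u ≠ 0 → u ᵥ* C ≠ 0 := by
    intro u hu hvc
    obtain ⟨y, hy⟩ := hCsurj u
    apply hu
    rw [← dotProduct_self_eq_zero (v := u)]
    rw [Matrix.mulVecLin_apply] at hy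
    calc u ⬝ᵥ u = u ⬝ᵥ (C *ᵥ y) := by rw [hy]
      _ = (u ᵥ* C) ⬝ᵥ y := Matrix.dotProduct_mulVec u C y
      _ = 0 := by rw [hvc, zero_dotProduct]
  have hSinv := hS.inv
  have hGdet : IsUnit (C * S⁻¹ * Cᵀ).det := by
    rw [← Matrix.isUnit_iff_isUnit_det, ← Matrix.mulVec_injective_iff_isUnit]
    have hker : ∀ u : Fin l → ℝ, (C * S⁻¹ * Cᵀ) *ᵥ u = 0 → u = 0 := by
      intro u hu
      by_contra h0
      have hpos := hSinv.dotProduct_mulVec_pos (x := u ᵥ* C) (hCvec u h0)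
      rw [star_trivial] at hpos
      have : (u ᵥ* C) ⬝ᵥ (S⁻¹ *ᵥ (u ᵥ* C)) = u ⬝ᵥ ((C * S⁻¹ * Cᵀ) *ᵥ u) := by
        rw [← Matrix.mulVec_mulVec, ← Matrix.mulVec_mulVec, Matrix.mulVec_transpose,
          Matrix.dotProduct_mulVec u C]
      rw [this, hu, dotProduct_zero] at hpos
      exact lt_irrefl _ hpos
    intro a b hab
    have : (C * S⁻¹ * Cᵀ) *ᵥ (a - b) = 0 := by
      rw [Matrix.mulVec_sub, hab, sub_self]
    have := hker _ this
    exact sub_eq_zero.mp this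
  have : Invertible S := S.invertibleOfIsUnitDet hSdet
  have hPdet : IsUnit (blk3 A Bᵀ 0 0 S (-Cᵀ) 0 C 0).det := by
    rw [blk3, Matrix.fromRows_zero, Matrix.det_fromBlocks_zero₂₁, Matrix.det_fromBlocks₁₁]
    have h0 : (0 : Matrix (Fin l) (Fin l) ℝ) - C * ⅟S * (-Cᵀ) = C * S⁻¹ * Cᵀ := by
      rw [Matrix.invOf_eq_nonsing_inv, Matrix.mul_neg, zero_sub, neg_neg]
    rw [h0]
    exact hAdet.mul (hSdet.mul hGdet)
  set P := blk3 A Bᵀ 0 0 S (-Cᵀ) 0 C 0 with hP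
  set Bb := blk3 A Bᵀ 0 (-B) 0 (-Cᵀ) 0 C 0 with hBb
  -- the fixed-vector identity over ℝ
  have hmid2 : ∀ x : Fin n → ℝ, S *ᵥ ((S⁻¹*B) *ᵥ x) = B *ᵥ x := by
    intro x
    rw [Matrix.mulVec_mulVec, ← Matrix.mul_assoc, Matrix.mul_nonsing_inv _ hSdet,
      Matrix.one_mul]
  have hmid : ∀ x : Fin n → ℝ, S *ᵥ ((-(S⁻¹*B)) *ᵥ x) = -(B *ᵥ x) := by
    intro x
    rw [Matrix.neg_mulVec, Matrix.mulVec_neg, hmid2]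
  have hfix : ∀ (x : Fin n → ℝ) (z : Fin l → ℝ),
      Bb *ᵥ (Sum.elim x (Sum.elim ((-(S⁻¹*B)) *ᵥ x) z))
        = P *ᵥ (Sum.elim x (Sum.elim ((-(S⁻¹*B)) *ᵥ x) z)) := by
    intro x z
    rw [hBb, hP, blk3, blk3, Matrix.fromBlocks_mulVec, Matrix.fromBlocks_mulVec]
    simp only [Sum.elim_comp_inl, Sum.elim_comp_inr, Matrix.fromRows_mulVec,
      Matrix.fromCols_mulVec_sumElim, Matrix.fromBlocks_mulVec, Matrix.zero_mulVec,
      zero_add, add_zero]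
    funext a
    rcases a with i | j | k
    · simp
    · simp [Matrix.neg_mulVec, Matrix.mulVec_neg, hmid2 x]
    · simp
  have hPinvP : P⁻¹ * P = 1 := Matrix.nonsing_inv_mul _ hPdet
  set K := P⁻¹ * Bb with hK
  have hKfix : ∀ (x : Fin n → ℝ) (z : Fin l → ℝ),
      K *ᵥ (Sum.elim x (Sum.elim ((-(S⁻¹*B)) *ᵥ x) z))
        = Sum.elim x (Sum.elim ((-(S⁻¹*B)) *ᵥ x) z) := by
    intro x z
    rw [hK, ← Matrix.mulVec_mulVec, hfix, Matrix.mulVec_mulVec, hPinvP, Matrix.one_mulVec]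
  constructor
  · -- part 1: eigenvectors
    intro x z hxz
    constructor
    · intro h0
      rcases hxz with hx | hz
      · apply hx; funext i
        have := congrFun h0 (Sum.inl i)
        simpa using this
      · apply hz; funext k
        exact congrFun h0 (Sum.inr (Sum.inr k))
    · rw [one_smul]
      set f : ℝ →+* ℂ := algebraMap ℝ ℂ with hf
      have hcast : ∀ r : ℝ, f r = (r : ℂ) := fun r => rfl
      have hmapv : ∀ w : Fin n ⊕ (Fin m ⊕ Fin l) → ℝ,
          (K.map (fun x : ℝ => (x : ℂ))) *ᵥ (fun i => (w i : ℂ)) = fun i => ((K *ᵥ w) i : ℂ) := by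
        intro w
        funext i
        have := (RingHom.map_mulVec f K w i).symm
        exact this
      set w₁ : Fin n ⊕ (Fin m ⊕ Fin l) → ℝ :=
        Sum.elim x (Sum.elim ((-(S⁻¹*B)) *ᵥ x) (fun k => (z k).re)) with hw₁
      set w₂ : Fin n ⊕ (Fin m ⊕ Fin l) → ℝ :=
        Sum.elim 0 (Sum.elim ((-(S⁻¹*B)) *ᵥ (0 : Fin n → ℝ)) (fun k => (z k).im)) with hw₂
      have hsplit : (Sum.elim (fun i => (x i : ℂ))
          (Sum.elim (fun j => (((-(S⁻¹ * B)) *ᵥ x) j : ℂ)) z) : Fin n ⊕ (Fin m ⊕ Fin l) → ℂ)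
          = (fun i => (w₁ i : ℂ)) + Complex.I • (fun i => (w₂ i : ℂ)) := by
        funext i
        rcases i with i | j | k
        · simp [hw₁, hw₂]
        · simp [hw₁, hw₂, Matrix.mulVec_zero]
        · simp [hw₁, hw₂]
          rw [mul_comm]
          exact (Complex.re_add_im (z k)).symm
      rw [hsplit, Matrix.mulVec_add, Matrix.mulVec_smul, hmapv, hmapv,
        hKfix x (fun k => (z k).re)]
      congr 2
      have : w₂ = Sum.elim (0 : Fin n → ℝ)
          (Sum.elim ((-(S⁻¹*B)) *ᵥ (0 : Fin n → ℝ)) (fun k => (z k).im)) := hw₂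
      rw [show (K *ᵥ w₂) = w₂ from hKfix 0 (fun k => (z k).im)]
  · -- part 2: multiplicity
    set Q := blk3 1 0 0 (-(S⁻¹*B)) 1 0 0 0 1 with hQ
    set Q' := blk3 1 0 0 (S⁻¹*B) 1 0 0 0 1 with hQ'
    have hQmul : ∀ (x : Fin n → ℝ) (y : Fin m → ℝ) (z : Fin l → ℝ),
        Q *ᵥ Sum.elim x (Sum.elim y z) = Sum.elim x (Sum.elim ((-(S⁻¹*B)) *ᵥ x + y) z) := by
      intro x y z
      rw [hQ, blk3, Matrix.fromBlocks_mulVec]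
      simp only [Sum.elim_comp_inl, Sum.elim_comp_inr]
      funext i
      rcases i with i | j | k
      · simp
      · rw [Matrix.fromRows_mulVec, Matrix.fromBlocks_mulVec]
        simp
      · rw [Matrix.fromRows_mulVec, Matrix.fromBlocks_mulVec]
        simp
    have hQ'mul : ∀ (x : Fin n → ℝ) (y : Fin m → ℝ) (z : Fin l → ℝ),
        Q' *ᵥ Sum.elim x (Sum.elim y z) = Sum.elim x (Sum.elim ((S⁻¹*B) *ᵥ x + y) z) := by
      intro x y z
      rw [hQ', blk3, Matrix.fromBlocks_mulVec]
      simp only [Sum.elim_comp_inl, Sum.elim_comp_inr]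
      funext i
      rcases i with i | j | k
      · simp
      · rw [Matrix.fromRows_mulVec, Matrix.fromBlocks_mulVec]
        simp
      · rw [Matrix.fromRows_mulVec, Matrix.fromBlocks_mulVec]
        simp
    have hs1 : ∀ i : Fin n, (Pi.single (Sum.inl i) 1 : Fin n ⊕ (Fin m ⊕ Fin l) → ℝ)
        = Sum.elim (Pi.single i 1) (Sum.elim (0 : Fin m → ℝ) (0 : Fin l → ℝ)) := by
      intro i
      funext a
      rcases a with a | b | c <;> simp [Pi.single_apply]
    have hs2 : ∀ j : Fin m, (Pi.single (Sum.inr (Sum.inl j)) 1 : Fin n ⊕ (Fin m ⊕ Fin l) → ℝ)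
        = Sum.elim (0 : Fin n → ℝ) (Sum.elim (Pi.single j 1) (0 : Fin l → ℝ)) := by
      intro j
      funext a
      rcases a with a | b | c <;> simp [Pi.single_apply]
    have hs3 : ∀ k : Fin l, (Pi.single (Sum.inr (Sum.inr k)) 1 : Fin n ⊕ (Fin m ⊕ Fin l) → ℝ)
        = Sum.elim (0 : Fin n → ℝ) (Sum.elim (0 : Fin m → ℝ) (Pi.single k 1)) := by
      intro k
      funext a
      rcases a with a | b | c <;> simp [Pi.single_apply]
    have colext : ∀ M N : Matrix (Fin n ⊕ (Fin m ⊕ Fin l)) (Fin n ⊕ (Fin m ⊕ Fin l)) ℝ,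
        (∀ i, M *ᵥ Pi.single i 1 = N *ᵥ Pi.single i 1) → M = N := by
      intro M N h
      ext j i
      have := congrFun (h i) j
      simpa using this
    have hQ'Q : Q' * Q = 1 := by
      apply colext
      intro i
      rw [← Matrix.mulVec_mulVec, Matrix.one_mulVec]
      rcases i with i | j | k
      · rw [hs1 i, hQmul, hQ'mul]
        funext a
        rcases a with a | b | c <;> simp [Matrix.neg_mulVec, Pi.single_apply]
      · rw [hs2 j, hQmul, hQ'mul]
        funext a
        rcases a with a | b | c <;> simp [Matrix.neg_mulVec, Matrix.mulVec_zero, Pi.single_apply]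
      · rw [hs3 k, hQmul, hQ'mul]
        funext a
        rcases a with a | b | c <;> simp [Matrix.neg_mulVec, Matrix.mulVec_zero, Pi.single_apply]
    set T := Q' * K * Q with hT
    have hTfix1 : ∀ i : Fin n, T *ᵥ Pi.single (Sum.inl i) 1 = Pi.single (Sum.inl i) 1 := by
      intro i
      rw [hT, ← Matrix.mulVec_mulVec, ← Matrix.mulVec_mulVec, hs1 i, hQmul]
      have e1 : ((-(S⁻¹*B)) *ᵥ (Pi.single i 1) + (0 : Fin m → ℝ))
          = (-(S⁻¹*B)) *ᵥ (Pi.single i 1) := add_zero _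
      rw [e1, hKfix (Pi.single i 1) 0, hQ'mul]
      funext a
      rcases a with a | b | c <;> simp [Matrix.neg_mulVec, Pi.single_apply]
    have hTfix3 : ∀ k : Fin l,
        T *ᵥ Pi.single (Sum.inr (Sum.inr k)) 1 = Pi.single (Sum.inr (Sum.inr k)) 1 := by
      intro k
      rw [hT, ← Matrix.mulVec_mulVec, ← Matrix.mulVec_mulVec, hs3 k, hQmul]
      have e1 : ((-(S⁻¹*B)) *ᵥ (0 : Fin n → ℝ) + (0 : Fin m → ℝ))
          = (-(S⁻¹*B)) *ᵥ (0 : Fin n → ℝ) := add_zero _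
      rw [e1, hKfix 0 (Pi.single k 1), hQ'mul]
      funext a
      rcases a with a | b | c <;> simp [Matrix.neg_mulVec, Matrix.mulVec_zero, Pi.single_apply]
    set s : Finset (Fin n ⊕ (Fin m ⊕ Fin l)) :=
      (Finset.univ.image (Sum.inl : Fin n → Fin n ⊕ (Fin m ⊕ Fin l))) ∪
      (Finset.univ.image ((Sum.inr ∘ Sum.inr) : Fin l → Fin n ⊕ (Fin m ⊕ Fin l))) with hs
    have hcol : ∀ i ∈ s, ∀ j, T j i = if j = i then 1 else 0 := by
      intro i hi j
      rw [hs, Finset.mem_union] at hi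
      have key : T *ᵥ Pi.single i 1 = Pi.single i 1 := by
        rcases hi with hi | hi
        · obtain ⟨a, -, rfl⟩ := Finset.mem_image.mp hi
          exact hTfix1 a
        · obtain ⟨a, -, rfl⟩ := Finset.mem_image.mp hi
          exact hTfix3 a
      have := congrFun key j
      simpa [Pi.single_apply] using this
    have hcard : s.card = n + l := by
      rw [hs, Finset.card_union_of_disjoint]
      · rw [Finset.card_image_of_injective _ Sum.inl_injective,
          Finset.card_image_of_injective _ (Sum.inr_injective.comp Sum.inr_injective),
          Finset.card_univ, Finset.card_univ, Fintype.card_fin, Fintype.card_fin]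
      · rw [Finset.disjoint_left]
        rintro a ha hb
        obtain ⟨a1, -, rfl⟩ := Finset.mem_image.mp ha
        obtain ⟨a2, -, h⟩ := Finset.mem_image.mp hb
        exact absurd h (by simp)
    have hdvd : ((X : ℝ[X]) - 1) ^ (n + l) ∣ K.charpoly := by
      rw [← hcard, ← aux_charpoly_conj K Q Q' hQ'Q]
      exact aux_pow_dvd_charpoly T s hcol
    have hne : K.charpoly ≠ 0 := (Matrix.charpoly_monic K).ne_zero
    rw [Polynomial.le_rootMultiplicity_iff hne]
    simpa using hdvd
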